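/- arXiv:1706.02952 — 2 statements merged into one kernel-verified Lean document; each statement's English description precedes it below -/
import Mathlib

section
/- (Theorem 1, MLE case) Let p(x) be a distribution over inputs, pCM(y|x) and pTM(y|x;θ) conditional distributions on {+1,-1} with pTM strictly positive. Then (E_{x~p, y~pCM(·|x)}[1[pTM(y|x;θ) ≤ 1/2]])² ≤ E_{x~p}[ -pCM(+1|x)·log pTM(+1|x;θ) - pCM(-1|x)·log pTM(-1|x;θ) + 2·exp(-2·|log pTM(+1|x;θ) - log pTM(-1|x;θ)|) ]. -/
open Real Finset

/-- Key scalar inequality: for `q ∈ [0,1]`, `0 < a ≤ 1/2`, `b = 1 - a`,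
`q ≤ -q·log a + 2·exp(-2(log b - log a))`. -/
lemma key1 (q a b : ℝ) (hq0 : 0 ≤ q) (hq1 : q ≤ 1) (ha0 : 0 < a)
    (hb : b = 1 - a) (ha : a ≤ 1 / 2) :
    q ≤ q * (-Real.log a) + 2 * Real.exp (-2 * (Real.log b - Real.log a)) := by
  subst hb
  have hb0 : (0:ℝ) < 1 - a := by linarith
  have e1 : Real.exp (2 * Real.log a) = a * a := by
    rw [two_mul, Real.exp_add, Real.exp_log ha0]
  have e2 : Real.exp (2 * Real.log (1 - a)) = (1 - a) * (1 - a) := by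
    rw [two_mul, Real.exp_add, Real.exp_log hb0]
  have hexp : Real.exp (-2 * (Real.log (1 - a) - Real.log a))
      = a * a / ((1 - a) * (1 - a)) := by
    rw [show -2 * (Real.log (1 - a) - Real.log a)
        = 2 * Real.log a - 2 * Real.log (1 - a) by ring,
      Real.exp_sub, e1, e2]
  rw [hexp]
  by_cases hL : Real.log a ≤ -1
  · have h1 : 0 ≤ a * a / ((1 - a) * (1 - a)) := by positivity
    nlinarith [mul_le_mul_of_nonneg_left (neg_le_neg hL) hq0]
  · push_neg at hL
    have ha' : (0.3678 : ℝ) < a := by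
      have h2 : Real.exp (-1) < Real.exp (Real.log a) :=
        Real.exp_lt_exp.mpr (by linarith)
      rw [Real.exp_log ha0] at h2
      have h3 : (0.3678 : ℝ) < Real.exp (-1) := by
        rw [Real.exp_neg, lt_inv_comm₀ (by norm_num) (Real.exp_pos 1)]
        calc Real.exp 1 < 2.7182818286 := Real.exp_one_lt_d9
          _ < (0.3678 : ℝ)⁻¹ := by norm_num
      linarith
    have hlog : Real.log a ≤ -Real.log 2 := by
      have h4 : Real.log a ≤ Real.log (1 / 2) :=
        Real.log_le_log ha0 ha
      rwa [one_div, Real.log_inv] at h4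
    have hl2 : (0.6931471803 : ℝ) < Real.log 2 := Real.log_two_gt_d9
    have key : (0.31 : ℝ) ≤ 2 * (a * a / ((1 - a) * (1 - a))) := by
      rw [show 2 * (a * a / ((1 - a) * (1 - a))) = 2 * (a * a) / ((1 - a) * (1 - a)) by ring,
        le_div_iff₀ (by positivity)]
      nlinarith
    have hq : q * (1 + Real.log a) ≤ 0.31 := by nlinarith
    linarith
/-- Pointwise bound: the misclassification indicator is bounded by
cross-entropy plus the exponential margin term. -/
lemma pointwise (qt qf a b : ℝ) (hqt : 0 ≤ qt) (hqf : 0 ≤ qf) (hqs : qt + qf = 1)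
    (ha0 : 0 < a) (hb0 : 0 < b) (hab : a + b = 1) :
    qt * (if a ≤ 1 / 2 then 1 else 0) + qf * (if b ≤ 1 / 2 then 1 else 0)
      ≤ -qt * Real.log a - qf * Real.log b
        + 2 * Real.exp (-2 * |Real.log a - Real.log b|) := by
  have hla : Real.log a ≤ 0 := Real.log_nonpos (le_of_lt ha0) (by linarith)
  have hlb : Real.log b ≤ 0 := Real.log_nonpos (le_of_lt hb0) (by linarith)
  have hqt1 : qt ≤ 1 := by linarith
  have hqf1 : qf ≤ 1 := by linarith
  rcases le_or_gt a (1/2) with h1 | h1 <;> rcases le_or_gt b (1/2) with h2 | h2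
  · -- a = b = 1/2
    have haa : a = 1/2 := by linarith
    have hbb : b = 1/2 := by linarith
    subst haa; subst hbb
    simp only [le_refl, if_pos, sub_self, abs_zero, mul_zero, Real.exp_zero]
    have : Real.log (1/2 : ℝ) = -Real.log 2 := by
      rw [one_div, Real.log_inv]
    rw [this]
    have hl2 : 0 < Real.log 2 := Real.log_pos (by norm_num)
    nlinarith
  · -- a ≤ 1/2 < b
    rw [if_pos h1, if_neg (not_le.mpr h2)]
    have hlab : Real.log a ≤ Real.log b := Real.log_le_log ha0 (by linarith)
    rw [abs_of_nonpos (by linarith), neg_sub]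
    have hkey := key1 qt a b hqt hqt1 ha0 (by linarith) h1
    nlinarith [mul_nonneg hqf (neg_nonneg.mpr hlb)]
  · -- b ≤ 1/2 < a
    rw [if_neg (not_le.mpr h1), if_pos h2]
    have hlab : Real.log b ≤ Real.log a := Real.log_le_log hb0 (by linarith)
    rw [abs_of_nonneg (by linarith)]
    have hkey := key1 qf b a hqf hqf1 hb0 (by linarith) h2
    nlinarith [mul_nonneg hqt (neg_nonneg.mpr hla)]
  · linarith

/-- Theorem 1, MLE case: the squared generalization error of the TM classifier
under data generated by `D_CM = p(x)·pCM(y|x)` is bounded by the expected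
cross-entropy plus an exponential margin penalty. -/
theorem stmt15 {X : Type*} [Fintype X]
    (p : X → ℝ) (pCM pTM : X → Bool → ℝ)
    (hp : ∀ x, 0 ≤ p x) (hpsum : ∑ x, p x = 1)
    (hCMnn : ∀ x y, 0 ≤ pCM x y) (hCMsum : ∀ x, pCM x true + pCM x false = 1)
    (hTMpos : ∀ x y, 0 < pTM x y) (hTMsum : ∀ x, pTM x true + pTM x false = 1) :
    (∑ x, p x * (pCM x true * (if pTM x true ≤ 1 / 2 then 1 else 0)
        + pCM x false * (if pTM x false ≤ 1 / 2 then 1 else 0))) ^ 2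
    ≤ ∑ x, p x * (-pCM x true * Real.log (pTM x true)
        - pCM x false * Real.log (pTM x false)
        + 2 * Real.exp (-2 * |Real.log (pTM x true) - Real.log (pTM x false)|)) := by
  set S := ∑ x, p x * (pCM x true * (if pTM x true ≤ 1 / 2 then 1 else 0)
      + pCM x false * (if pTM x false ≤ 1 / 2 then 1 else 0)) with hS
  have hfx : ∀ x : X, 0 ≤ pCM x true * (if pTM x true ≤ 1 / 2 then 1 else 0)
      + pCM x false * (if pTM x false ≤ 1 / 2 then 1 else 0) := by
    intro x
    have := hCMnn x true; have := hCMnn x false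
    positivity
  have hfx1 : ∀ x : X, pCM x true * (if pTM x true ≤ 1 / 2 then 1 else 0)
      + pCM x false * (if pTM x false ≤ 1 / 2 then 1 else 0) ≤ 1 := by
    intro x
    have h1 : (if pTM x true ≤ 1 / 2 then (1:ℝ) else 0) ≤ 1 := by split <;> norm_num
    have h2 : (if pTM x false ≤ 1 / 2 then (1:ℝ) else 0) ≤ 1 := by split <;> norm_num
    have := hCMnn x true; have := hCMnn x false; have := hCMsum x
    nlinarith
  have hS0 : 0 ≤ S := Finset.sum_nonneg fun x _ => mul_nonneg (hp x) (hfx x)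
  have hS1 : S ≤ 1 := by
    calc S ≤ ∑ x, p x :=
          Finset.sum_le_sum fun x _ => mul_le_of_le_one_right (hp x) (hfx1 x)
      _ = 1 := hpsum
  have hSle : S ≤ ∑ x, p x * (-pCM x true * Real.log (pTM x true)
      - pCM x false * Real.log (pTM x false)
      + 2 * Real.exp (-2 * |Real.log (pTM x true) - Real.log (pTM x false)|)) := by
    rw [hS]
    refine Finset.sum_le_sum fun x _ => mul_le_mul_of_nonneg_left ?_ (hp x)
    exact pointwise (pCM x true) (pCM x false) (pTM x true) (pTM x false)
      (hCMnn x true) (hCMnn x false) (hCMsum x)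
      (hTMpos x true) (hTMpos x false) (hTMsum x)
  nlinarith
end

section
/- (Theorem 1, ERM case (a)) Let p(x) be a distribution over a finite input set, pCM(y|x) a conditional distribution on {+1,-1}, and r1(x), r2(x) ∈ [0,1] risk values with induced pseudo-confidence pTM(+1|x) = exp(-c·r1(x))/(exp(-c·r1(x))+exp(-c·r2(x))) for c > 0. Then (E_{x~p, y~pCM(·|x)}[1[r(y,x,θ) > r(-y,x,θ)]])² ≤ E_{x~p}[ c·pCM(+1|x)·r1(x) + c·pCM(-1|x)·r2(x) + log(1 + exp(-c·|r1(x) - r2(x)|)) + 2·exp(-2c·|r1(x) - r2(x)|) ]. -/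
open Real Finset

lemma key_one_le_aux (t : ℝ) : 1 ≤ t + 2 * Real.exp (-2 * t) := by
  have h := Real.add_one_le_exp (-2*t + 2*Real.log 2)
  have h2 : Real.exp (-2*t + 2*Real.log 2) = Real.exp (-2*t) * 4 := by
    rw [show -2*t + 2*Real.log 2 = (-2*t) + (Real.log 2 + Real.log 2) by ring,
      Real.exp_add, Real.exp_add, Real.exp_log two_pos]
    ring
  rw [h2] at h
  have hlog := Real.log_two_gt_d9
  nlinarith

/-- Theorem 1, ERM case (a): the squared generalization error of the
risk-minimizing classifier (predicting the label with smaller risk) under data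
generated by `D_CM = p(x)·pCM(y|x)` is bounded by the weighted risks plus
log-sum-exp and exponential margin terms. -/
theorem stmt16 {X : Type*} [Fintype X]
    (p : X → ℝ) (pCM : X → Bool → ℝ) (r1 r2 : X → ℝ) (c : ℝ) (hc : 0 < c)
    (hp : ∀ x, 0 ≤ p x) (hpsum : ∑ x, p x = 1)
    (hCMnn : ∀ x y, 0 ≤ pCM x y) (hCMsum : ∀ x, pCM x true + pCM x false = 1)
    (hr1 : ∀ x, r1 x ∈ Set.Icc (0 : ℝ) 1) (hr2 : ∀ x, r2 x ∈ Set.Icc (0 : ℝ) 1) :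
    -- label `true` is +1 with risk `r1 x`; label `false` is -1 with risk `r2 x`
    (∑ x, p x * (pCM x true * (if r2 x < r1 x then 1 else 0)
        + pCM x false * (if r1 x < r2 x then 1 else 0))) ^ 2
    ≤ ∑ x, p x * (c * pCM x true * r1 x + c * pCM x false * r2 x
        + Real.log (1 + Real.exp (-c * |r1 x - r2 x|))
        + 2 * Real.exp (-2 * c * |r1 x - r2 x|)) := by
  set err : X → ℝ := fun x => pCM x true * (if r2 x < r1 x then 1 else 0)
      + pCM x false * (if r1 x < r2 x then 1 else 0) with herr
  set B : X → ℝ := fun x => c * pCM x true * r1 x + c * pCM x false * r2 x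
      + Real.log (1 + Real.exp (-c * |r1 x - r2 x|))
      + 2 * Real.exp (-2 * c * |r1 x - r2 x|) with hB
  have herr01 : ∀ x, 0 ≤ err x ∧ err x ≤ 1 := by
    intro x
    have h1 := hCMnn x true
    have h2 := hCMnn x false
    have h3 := hCMsum x
    constructor <;> simp only [herr] <;> split_ifs <;> nlinarith
  have hpt : ∀ x, err x ≤ B x := by
    intro x
    have hlog : 0 ≤ Real.log (1 + Real.exp (-c * |r1 x - r2 x|)) :=
      Real.log_nonneg (by nlinarith [Real.exp_pos (-c * |r1 x - r2 x|)])
    have hexp : (0:ℝ) < Real.exp (-2 * c * |r1 x - r2 x|) := Real.exp_pos _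
    have h1 := hCMnn x true
    have h2 := hCMnn x false
    have h3 := hCMsum x
    have hr1' := hr1 x
    have hr2' := hr2 x
    simp only [Set.mem_Icc] at hr1' hr2'
    rcases lt_trichotomy (r1 x) (r2 x) with h | h | h
    · -- predicts true; error mass pCM x false
      have habs : |r1 x - r2 x| = r2 x - r1 x := by
        rw [abs_of_nonpos (by linarith)]; ring
      have hkey := key_one_le_aux (c * (r2 x - r1 x))
      have heq : -2 * c * |r1 x - r2 x| = -2 * (c * (r2 x - r1 x)) := by
        rw [habs]; ring
      have hexp' : (0:ℝ) < Real.exp (-2 * (c * (r2 x - r1 x))) := Real.exp_pos _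
      simp only [herr, hB, if_pos h, if_neg (not_lt.2 h.le), heq]
      nlinarith [mul_le_mul_of_nonneg_left hkey h2,
        mul_nonneg (show (0:ℝ) ≤ 1 - pCM x false by linarith)
          (mul_nonneg (by norm_num : (0:ℝ) ≤ 2) hexp'.le),
        mul_nonneg (mul_nonneg hc.le h2) hr1'.1,
        mul_nonneg (mul_nonneg hc.le h1) hr1'.1]
    · have h0 : err x = 0 := by simp [herr, h]
      rw [h0]
      show (0:ℝ) ≤ c * pCM x true * r1 x + c * pCM x false * r2 x
        + Real.log (1 + Real.exp (-c * |r1 x - r2 x|))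
        + 2 * Real.exp (-2 * c * |r1 x - r2 x|)
      nlinarith [mul_nonneg (mul_nonneg hc.le h1) hr1'.1,
        mul_nonneg (mul_nonneg hc.le h2) hr2'.1]
    · have habs : |r1 x - r2 x| = r1 x - r2 x := by
        rw [abs_of_nonneg (by linarith)]
      have hkey := key_one_le_aux (c * (r1 x - r2 x))
      have heq : -2 * c * |r1 x - r2 x| = -2 * (c * (r1 x - r2 x)) := by
        rw [habs]; ring
      have hexp' : (0:ℝ) < Real.exp (-2 * (c * (r1 x - r2 x))) := Real.exp_pos _
      simp only [herr, hB, if_pos h, if_neg (not_lt.2 h.le), heq]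
      nlinarith [mul_le_mul_of_nonneg_left hkey h1,
        mul_nonneg (show (0:ℝ) ≤ 1 - pCM x true by linarith)
          (mul_nonneg (by norm_num : (0:ℝ) ≤ 2) hexp'.le),
        mul_nonneg (mul_nonneg hc.le h1) hr2'.1,
        mul_nonneg (mul_nonneg hc.le h2) hr2'.1]
  have hS0 : 0 ≤ ∑ x, p x * err x :=
    Finset.sum_nonneg fun x _ => mul_nonneg (hp x) (herr01 x).1
  have hS1 : ∑ x, p x * err x ≤ 1 := by
    rw [← hpsum]
    exact Finset.sum_le_sum fun x _ => by
      nlinarith [(herr01 x).2, hp x, (herr01 x).1]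
  have hSB : ∑ x, p x * err x ≤ ∑ x, p x * B x :=
    Finset.sum_le_sum fun x _ => mul_le_mul_of_nonneg_left (hpt x) (hp x)
  calc (∑ x, p x * err x) ^ 2 ≤ ∑ x, p x * err x := by nlinarith
    _ ≤ ∑ x, p x * B x := hSB
end
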